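/- Every piecewise syndetic subset of a semigroup can be written as the intersection of a thick set and a syndetic set. -/

import Mathlib

/-- `A` is thick: every finite nonempty set can be right-translated into `A`. -/
def Thick {S : Type*} [Semigroup S] (A : Set S) : Prop :=
  ∀ E : Finset S, E.Nonempty → ∃ x : S, ∀ e ∈ E, e * x ∈ A

def Syndetic {S : Type*} [Semigroup S] (A : Set S) : Prop :=
  ∃ F : Finset S, F.Nonempty ∧ ∀ s : S, ∃ t ∈ F, t * s ∈ A

def PiecewiseSyndetic {S : Type*} [Semigroup S] (A : Set S) : Prop :=
  ∃ F : Finset S, F.Nonempty ∧ Thick {s : S | ∃ t ∈ F, t * s ∈ A}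

def ThickAdd {S : Type*} [AddSemigroup S] (A : Set S) : Prop :=
  ∀ E : Finset S, E.Nonempty → ∃ x : S, ∀ e ∈ E, e + x ∈ A

def SyndeticAdd {S : Type*} [AddSemigroup S] (A : Set S) : Prop :=
  ∃ F : Finset S, F.Nonempty ∧ ∀ s : S, ∃ t ∈ F, t + s ∈ A

def PiecewiseSyndeticAdd {S : Type*} [AddSemigroup S] (A : Set S) : Prop :=
  ∃ F : Finset S, F.Nonempty ∧ ThickAdd {s : S | ∃ t ∈ F, t + s ∈ A}

/-- Sum of `f t` over a nonempty finite `H ⊆ ℕ` in a commutative semigroup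
(junk value `f 0` when `H = ∅`). -/
def fSum {S : Type*} [AddCommSemigroup S] (H : Finset ℕ) (f : ℕ → S) : S :=
  match Finset.sort H (· ≤ ·) with
  | [] => f 0
  | a :: l => l.foldl (fun s t => s + f t) (f a)

/-- `J`-set in a commutative semigroup. -/
def JSetAdd {S : Type*} [AddCommSemigroup S] (A : Set S) : Prop :=
  ∀ F : Finset (ℕ → S), F.Nonempty →
    ∃ (a : S) (H : Finset ℕ), H.Nonempty ∧ ∀ f ∈ F, a + fSum H f ∈ A

/-- `x(m,a,t,f) = a(0)·f(t 0)·a(1)·f(t 1)⋯f(t (m-1))·a(m)` (0-indexed version of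
`(∏_{j=1}^m a(j)·f(t(j)))·a(m+1)`). -/
def xNC {S : Type*} [Semigroup S] (m : ℕ) (a : ℕ → S) (t : ℕ → ℕ) (f : ℕ → S) : S :=
  (List.range m).foldl (fun s j => s * f (t j) * a (j + 1)) (a 0)

/-- `J`-set in a not-necessarily-commutative semigroup. -/
def JSetNC {S : Type*} [Semigroup S] (A : Set S) : Prop :=
  ∀ G : Finset (ℕ → S), G.Nonempty →
    ∃ (m : ℕ) (a : ℕ → S) (t : ℕ → ℕ), 1 ≤ m ∧
      (∀ i j : ℕ, i < j → j < m → t i < t j) ∧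
      ∀ f ∈ G, xNC m a t f ∈ A

/-- `v 0 + v 1 + ⋯ + v r` in an additive semigroup. -/
def seqSum {S : Type*} [AddSemigroup S] (v : ℕ → S) (r : ℕ) : S :=
  (List.range r).foldl (fun s j => s + v (j + 1)) (v 0)

/-- `v 0 * v 1 * ⋯ * v r` in a semigroup. -/
def seqProd {S : Type*} [Semigroup S] (v : ℕ → S) (r : ℕ) : S :=
  (List.range r).foldl (fun s j => s * v (j + 1)) (v 0)

/-- Collectionwise piecewise syndetic family (multiplicative). -/
def CollectionwisePS {S : Type*} [Semigroup S] (𝒜 : Set (Set S)) : Prop :=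
  ∃ (G : Finset (Set S) → Finset S) (x : Finset (Set S) → Finset S → S),
    ∀ (F : Finset S) (ℱ ℋ : Finset (Set S)), ℱ.Nonempty → ↑ℋ ⊆ 𝒜 → ℱ ⊆ ℋ →
      ∀ y ∈ F, ∃ t ∈ G ℱ, t * (y * x ℋ F) ∈ ⋂₀ (ℱ : Set (Set S))

/-- Collectionwise piecewise syndetic family (additive). -/
def CollectionwisePSAdd {S : Type*} [AddSemigroup S] (𝒜 : Set (Set S)) : Prop :=
  ∃ (G : Finset (Set S) → Finset S) (x : Finset (Set S) → Finset S → S),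
    ∀ (F : Finset S) (ℱ ℋ : Finset (Set S)), ℱ.Nonempty → ↑ℋ ⊆ 𝒜 → ℱ ⊆ ℋ →
      ∀ y ∈ F, ∃ t ∈ G ℱ, t + (y + x ℋ F) ∈ ⋂₀ (ℱ : Set (Set S))

/-- Central set (multiplicative), via the combinatorial characterization. -/
def Central {S : Type*} [Semigroup S] (A : Set S) : Prop :=
  ∃ (I : Type) (C : I → Set S), Nonempty I ∧
    (∀ N, C N ⊆ A) ∧
    (∀ N M : I, ∃ P : I, C P ⊆ C N ∧ C P ⊆ C M) ∧
    (∀ N : I, ∀ y ∈ C N, ∃ M : I, C M ⊆ {s : S | y * s ∈ C N}) ∧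
    CollectionwisePS {B : Set S | ∃ N : I, B = C N}

/-- Central set (additive), via the combinatorial characterization. -/
def CentralAdd {S : Type*} [AddSemigroup S] (A : Set S) : Prop :=
  ∃ (I : Type) (C : I → Set S), Nonempty I ∧
    (∀ N, C N ⊆ A) ∧
    (∀ N M : I, ∃ P : I, C P ⊆ C N ∧ C P ⊆ C M) ∧
    (∀ N : I, ∀ y ∈ C N, ∃ M : I, C M ⊆ {s : S | y + s ∈ C N}) ∧
    CollectionwisePSAdd {B : Set S | ∃ N : I, B = C N}

/-- every piecewise syndetic set is the intersection of a thick set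
and a syndetic set. -/
theorem piecewiseSyndetic_eq_thick_inter_syndetic {S : Type*} [Semigroup S]
    (A : Set S) (hA : PiecewiseSyndetic A) :
    ∃ T B : Set S, Thick T ∧ Syndetic B ∧ A = T ∩ B := by
  classical
  obtain ⟨F, hF, hthick⟩ := hA
  set G : Set S := {s | ∃ t ∈ F, t * s ∈ A} with hGdef
  refine ⟨A ∪ G, A ∪ (Aᶜ ∩ Gᶜ), ?_, ?_, ?_⟩
  · intro E hE
    obtain ⟨x, hx⟩ := hthick E hE
    exact ⟨x, fun e he => Or.inr (hx e he)⟩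
  · refine ⟨F ∪ Finset.image₂ (· * ·) F F, ?_, ?_⟩
    · obtain ⟨t₀, ht₀⟩ := hF
      exact ⟨t₀, Finset.mem_union_left _ ht₀⟩
    · intro s
      obtain ⟨t₀, ht₀⟩ := hF
      by_cases hA1 : t₀ * s ∈ A
      · exact ⟨t₀, Finset.mem_union_left _ ht₀, Or.inl hA1⟩
      by_cases hG1 : t₀ * s ∈ G
      · obtain ⟨t', ht', ht'A⟩ := hG1
        refine ⟨t' * t₀, Finset.mem_union_right _ ?_, Or.inl ?_⟩
        · exact Finset.mem_image₂_of_mem ht' ht₀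
        · rw [mul_assoc]; exact ht'A
      · exact ⟨t₀, Finset.mem_union_left _ ht₀, Or.inr ⟨hA1, hG1⟩⟩
  · ext s
    constructor
    · intro hs
      exact ⟨Or.inl hs, Or.inl hs⟩
    · rintro ⟨hT, hB⟩
      rcases hT with h | h
      · exact h
      · rcases hB with h' | ⟨_, h'⟩
        · exact h'
        · exact absurd h h'
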